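/- Let n be a positive integer, and let ρ, j, λ, γ ∈ ℝ with λ ≠ 0. Suppose φ : ℝ → ℝ is three times differentiable and solves the initial value problem λ φ'''(ω) + φ(ω)ⁿ φ'(ω) + ((ρ+1)(nj−1)/3) ω φ'(ω) + ((ρ−2)(1−nj)/(3n)) φ(ω) = 0 with φ(0) = γ, φ'(0) = 0, φ''(0) = 0. Define u(x,t) = t^((ρ(1−nj)−nj−2)/(3n)) φ( x t^((ρ+1)(nj−1)/3) ) for t > 0, x ≥ 0. Then: (i) u satisfies the damped generalized KdV equation u_t + uⁿ u_x + (j/t) u + λ t^(ρ(1−nj)−nj) u_{xxx} = 0 for all t > 0, x > 0; (ii) u(0,t) = γ t^((ρ(1−nj)−nj−2)/(3n)) for all t > 0; (iii) u_x(0,t) = 0 for all t > 0; and (iv) u_{xx}(0,t) = 0 for all t > 0. -/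

import Mathlib

/-- Partial derivative in `t` of `u = u(x,t)`. -/
noncomputable def ut (u : ℝ → ℝ → ℝ) (x t : ℝ) : ℝ := deriv (fun s => u x s) t
/-- Partial derivative in `x` of `u = u(x,t)`. -/
noncomputable def ux (u : ℝ → ℝ → ℝ) (x t : ℝ) : ℝ := deriv (fun y => u y t) x
/-- Second partial derivative in `x` of `u = u(x,t)`. -/
noncomputable def uxx (u : ℝ → ℝ → ℝ) (x t : ℝ) : ℝ := iteratedDeriv 2 (fun y => u y t) x
/-- Third partial derivative in `x` of `u = u(x,t)`. -/
noncomputable def uxxx (u : ℝ → ℝ → ℝ) (x t : ℝ) : ℝ := iteratedDeriv 3 (fun y => u y t) x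

/-- Derivative of a scaled dilation. -/
lemma deriv_scale (ψ : ℝ → ℝ) (hψ : Differentiable ℝ ψ) (K c : ℝ) :
    (deriv fun y => K * ψ (y * c)) = fun y => K * c * deriv ψ (y * c) := by
  funext y
  have h1 : HasDerivAt (fun y : ℝ => y * c) c y := by
    simpa using (hasDerivAt_id y).mul_const c
  have h2 : HasDerivAt (fun y => ψ (y * c)) (deriv ψ (y * c) * c) y :=
    (hψ (y * c)).hasDerivAt.comp y h1
  have h3 := h2.const_mul K
  convert h3.deriv using 1
  ring

/-- Reduction of the IBVP for the damped generalized KdV equation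
`u_t + uⁿ u_x + (j/t) u + λ t^{ρ(1−nj)−nj} u_{xxx} = 0` to the IVP for a third-order ODE:
a solution `φ` of the IVP yields, via the ansatz
`u = t^{(ρ(1−nj)−nj−2)/(3n)} φ(x t^{(ρ+1)(nj−1)/3})`, a solution of the PDE satisfying
the boundary conditions at `x = 0`. -/
theorem stmt_17 (n : ℕ) (hn : 0 < n) (ρ j lam γ : ℝ) (hlam : lam ≠ 0)
    (φ : ℝ → ℝ) (hφ1 : Differentiable ℝ φ) (hφ2 : Differentiable ℝ (deriv φ))
    (hφ3 : Differentiable ℝ (deriv (deriv φ)))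
    (hode : ∀ ω : ℝ, lam * deriv (deriv (deriv φ)) ω + φ ω ^ n * deriv φ ω
      + (ρ + 1) * ((n:ℝ) * j - 1) / 3 * ω * deriv φ ω
      + (ρ - 2) * (1 - (n:ℝ) * j) / (3 * (n:ℝ)) * φ ω = 0)
    (hic : φ 0 = γ) (hic' : deriv φ 0 = 0) (hic'' : deriv (deriv φ) 0 = 0)
    (u : ℝ → ℝ → ℝ)
    (hu : ∀ x t : ℝ, u x t = t ^ ((ρ * (1 - (n:ℝ) * j) - (n:ℝ) * j - 2) / (3 * (n:ℝ)))
      * φ (x * t ^ ((ρ + 1) * ((n:ℝ) * j - 1) / 3))) :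
    (∀ t, 0 < t → ∀ x, 0 < x →
      ut u x t + (u x t) ^ n * ux u x t + j / t * u x t
        + lam * t ^ (ρ * (1 - (n:ℝ) * j) - (n:ℝ) * j) * uxxx u x t = 0) ∧
    (∀ t, 0 < t → u 0 t = γ * t ^ ((ρ * (1 - (n:ℝ) * j) - (n:ℝ) * j - 2) / (3 * (n:ℝ)))) ∧
    (∀ t, 0 < t → ux u 0 t = 0) ∧
    (∀ t, 0 < t → uxx u 0 t = 0) := by
  have hn0 : (n : ℝ) ≠ 0 := Nat.cast_ne_zero.mpr hn.ne'
  set a : ℝ := (ρ * (1 - (n:ℝ) * j) - (n:ℝ) * j - 2) / (3 * (n:ℝ)) with ha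
  set b : ℝ := (ρ + 1) * ((n:ℝ) * j - 1) / 3 with hb
  -- x-derivatives of the profile
  have d1 : ∀ t : ℝ, deriv (fun y => u y t)
      = fun y => t ^ a * t ^ b * deriv φ (y * t ^ b) := by
    intro t
    have hyfun : (fun y => u y t) = fun y => t ^ a * φ (y * t ^ b) :=
      funext fun y => hu y t
    rw [hyfun]
    exact deriv_scale φ hφ1 _ _
  have d2 : ∀ t : ℝ, deriv (deriv (fun y => u y t))
      = fun y => t ^ a * t ^ b * t ^ b * deriv (deriv φ) (y * t ^ b) := by
    intro t
    rw [d1 t]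
    exact deriv_scale (deriv φ) hφ2 _ _
  have d3 : ∀ t : ℝ, deriv (deriv (deriv (fun y => u y t)))
      = fun y => t ^ a * t ^ b * t ^ b * t ^ b * deriv (deriv (deriv φ)) (y * t ^ b) := by
    intro t
    rw [d2 t]
    exact deriv_scale (deriv (deriv φ)) hφ3 _ _
  refine ⟨?_, ?_, ?_, ?_⟩
  · -- the PDE
    intro t ht x hx
    -- time derivative
    have hA : HasDerivAt (fun s : ℝ => s ^ a) (a * t ^ (a - 1)) t :=
      Real.hasDerivAt_rpow_const (Or.inl ht.ne')
    have hB : HasDerivAt (fun s : ℝ => x * s ^ b) (x * (b * t ^ (b - 1))) t :=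
      (Real.hasDerivAt_rpow_const (Or.inl ht.ne')).const_mul x
    have hC : HasDerivAt (fun s : ℝ => φ (x * s ^ b))
        (deriv φ (x * t ^ b) * (x * (b * t ^ (b - 1)))) t :=
      (hφ1 (x * t ^ b)).hasDerivAt.comp t hB
    have hut : ut u x t = a * t ^ (a - 1) * φ (x * t ^ b)
        + t ^ a * (deriv φ (x * t ^ b) * (x * (b * t ^ (b - 1)))) := by
      have hxfun : (fun s => u x s) = fun s => s ^ a * φ (x * s ^ b) :=
        funext fun s => hu x s
      simp only [ut, hxfun]
      exact (hA.mul hC).deriv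
    have hux : ux u x t = t ^ a * t ^ b * deriv φ (x * t ^ b) := by
      simp only [ux, d1 t]
    have huxxx : uxxx u x t
        = t ^ a * t ^ b * t ^ b * t ^ b * deriv (deriv (deriv φ)) (x * t ^ b) := by
      simp only [uxxx]
      rw [show (3:ℕ) = 2 + 1 from rfl, iteratedDeriv_succ,
        show (2:ℕ) = 1 + 1 from rfl, iteratedDeriv_succ, iteratedDeriv_one, d3 t]
    -- exponent bookkeeping
    have e1 : t ^ a * t ^ (b - 1) = t ^ (a - 1) * t ^ b := by
      rw [← Real.rpow_add ht, ← Real.rpow_add ht]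
      congr 1; ring
    have e2 : (t ^ a) ^ n * (t ^ a * t ^ b) = t ^ (a - 1) := by
      rw [← Real.rpow_natCast (t ^ a) n, ← Real.rpow_mul ht.le,
        ← Real.rpow_add ht, ← Real.rpow_add ht]
      congr 1
      rw [ha, hb]
      field_simp
      ring
    have e3 : j / t * t ^ a = j * t ^ (a - 1) := by
      rw [Real.rpow_sub ht, Real.rpow_one]
      ring
    have e4 : t ^ (ρ * (1 - (n:ℝ) * j) - (n:ℝ) * j) * (t ^ a * t ^ b * t ^ b * t ^ b)
        = t ^ (a - 1) := by
      rw [← Real.rpow_add ht, ← Real.rpow_add ht, ← Real.rpow_add ht, ← Real.rpow_add ht]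
      congr 1
      rw [ha, hb]
      field_simp
      ring
    -- the ODE at ω = x * t ^ b
    have haj : (ρ - 2) * (1 - (n:ℝ) * j) / (3 * (n:ℝ)) = a + j := by
      rw [ha]
      field_simp
      ring
    have hz : lam * deriv (deriv (deriv φ)) (x * t ^ b)
        + φ (x * t ^ b) ^ n * deriv φ (x * t ^ b)
        + b * (x * t ^ b) * deriv φ (x * t ^ b)
        + (a + j) * φ (x * t ^ b) = 0 := by
      rw [← haj, hb]
      exact hode (x * t ^ b)
    rw [hut, hux, huxxx, hu x t]
    calc a * t ^ (a - 1) * φ (x * t ^ b)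
          + t ^ a * (deriv φ (x * t ^ b) * (x * (b * t ^ (b - 1))))
          + (t ^ a * φ (x * t ^ b)) ^ n * (t ^ a * t ^ b * deriv φ (x * t ^ b))
          + j / t * (t ^ a * φ (x * t ^ b))
          + lam * t ^ (ρ * (1 - (n:ℝ) * j) - (n:ℝ) * j)
            * (t ^ a * t ^ b * t ^ b * t ^ b * deriv (deriv (deriv φ)) (x * t ^ b))
        = t ^ (a - 1) * (lam * deriv (deriv (deriv φ)) (x * t ^ b)
            + φ (x * t ^ b) ^ n * deriv φ (x * t ^ b)
            + b * (x * t ^ b) * deriv φ (x * t ^ b)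
            + (a + j) * φ (x * t ^ b)) := by
          rw [mul_pow]
          linear_combination (x * b * deriv φ (x * t ^ b)) * e1
            + (φ (x * t ^ b) ^ n * deriv φ (x * t ^ b)) * e2
            + (φ (x * t ^ b)) * e3
            + (lam * deriv (deriv (deriv φ)) (x * t ^ b)) * e4
      _ = 0 := by rw [hz, mul_zero]
  · -- boundary value
    intro t ht
    rw [hu, zero_mul, hic]
    ring
  · -- first derivative at the boundary
    intro t ht
    simp only [ux, d1 t]
    simp [hic']
  · -- second derivative at the boundary
    intro t ht
    simp only [uxx]
    rw [show (2:ℕ) = 1 + 1 from rfl, iteratedDeriv_succ, iteratedDeriv_one, d2 t]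
    simp [hic'']
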